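/- For independent observations X₁,...,X_d where exactly s have density f₁ and d - s have density f₀ (with respect to a common dominating measure), f₀ ≠ f₁, s < d, the selector η̂_j = 1{log(f₁(X_j)/f₀(X_j)) ≥ log(d/s - 1)} satisfies sup over labelings η of E|η̂ - η| = s·Ψ, where Ψ = P₁(log(f₁/f₀)(X) < log(d/s - 1)) + (d/s - 1)·P₀(log(f₁/f₀)(X) ≥ log(d/s - 1)), and P_k denotes probability under density f_k. -/

import Mathlib

open MeasureTheory

theorem two_density_selector_risk {𝒳 : Type*} [MeasurableSpace 𝒳]
    (ν : Measure 𝒳) (f₀ f₁ : 𝒳 → ENNReal)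
    (hf₀ : Measurable f₀) (hf₁ : Measurable f₁) (hne : f₀ ≠ f₁)
    (hP₀ : IsProbabilityMeasure (ν.withDensity f₀))
    (hP₁ : IsProbabilityMeasure (ν.withDensity f₁))
    (d s : ℕ) (hs : 1 ≤ s) (hsd : s < d)
    -- log-likelihood ratio
    (L : 𝒳 → ℝ) (hL : L = fun x => Real.log ((f₁ x).toReal / (f₀ x).toReal))
    -- risk value
    (Ψ : ℝ)
    (hΨ : Ψ = ((ν.withDensity f₁) {x | L x < Real.log ((d : ℝ) / s - 1)}).toReal
      + ((d : ℝ) / s - 1) *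
        ((ν.withDensity f₀) {x | Real.log ((d : ℝ) / s - 1) ≤ L x}).toReal) :
    (⨆ η : {η : Fin d → Bool // (Finset.univ.filter fun j => η j = true).card = s},
      ∫ x : Fin d → 𝒳,
        (∑ j, |(if Real.log ((d : ℝ) / s - 1) ≤ L (x j) then (1 : ℝ) else 0)
          - (if (η : Fin d → Bool) j then (1 : ℝ) else 0)|)
        ∂(Measure.pi fun j => if (η : Fin d → Bool) j then ν.withDensity f₁
            else ν.withDensity f₀))
      = s * Ψ := by
  set t : ℝ := Real.log ((d : ℝ) / s - 1) with ht
  have hLmeas : Measurable L := by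
    rw [hL]
    exact Real.measurable_log.comp (hf₁.ennreal_toReal.div hf₀.ennreal_toReal)
  have hA : MeasurableSet {x | t ≤ L x} := measurableSet_le measurable_const hLmeas
  have hAc' : {x | L x < t} = {x | t ≤ L x}ᶜ := by
    ext x; simp [not_le]
  set P1 : ℝ := ((ν.withDensity f₁) {x | L x < t}).toReal with hP1
  set P0 : ℝ := ((ν.withDensity f₀) {x | t ≤ L x}).toReal with hP0def
  have key : ∀ η : {η : Fin d → Bool // (Finset.univ.filter fun j => η j = true).card = s},
      (∫ x : Fin d → 𝒳,
        (∑ j, |(if t ≤ L (x j) then (1 : ℝ) else 0)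
          - (if (η : Fin d → Bool) j then (1 : ℝ) else 0)|)
        ∂(Measure.pi fun j => if (η : Fin d → Bool) j then ν.withDensity f₁
            else ν.withDensity f₀))
      = (s : ℝ) * P1 + ((d - s : ℕ) : ℝ) * P0 := by
    rintro ⟨η, hη⟩
    set μ : Fin d → Measure 𝒳 :=
      fun j => if η j then ν.withDensity f₁ else ν.withDensity f₀ with hμ
    haveI hprob : ∀ j, IsProbabilityMeasure (μ j) := by
      intro j; rw [hμ]; dsimp only; split <;> infer_instance
    set S : Fin d → Set 𝒳 := fun j => if η j then {x | t ≤ L x}ᶜ else {x | t ≤ L x} with hS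
    have hSmeas : ∀ j, MeasurableSet (S j) := by
      intro j; rw [hS]; dsimp only; split
      · exact hA.compl
      · exact hA
    have hpt : ∀ x : Fin d → 𝒳,
        (∑ j, |(if t ≤ L (x j) then (1 : ℝ) else 0) - (if η j then (1 : ℝ) else 0)|)
        = ∑ j, (S j).indicator (fun _ => (1 : ℝ)) (x j) := by
      intro x
      refine Finset.sum_congr rfl fun j _ => ?_
      rw [hS]; dsimp only
      by_cases hj : η j <;> by_cases hx : t ≤ L (x j) <;>
        simp [hj, hx, Set.indicator_apply, Set.mem_setOf_eq]
    have hmap : ∀ j, (Measure.pi μ).map (fun x => x j) = μ j := by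
      intro j
      refine Measure.ext fun u hu => ?_
      rw [Measure.map_apply (measurable_pi_apply j) hu]
      have : (fun x : Fin d → 𝒳 => x j) ⁻¹' u
          = Set.pi Set.univ (Function.update (fun _ : Fin d => Set.univ) j u) :=
        Set.eval_preimage
      rw [this, Measure.pi_pi]
      refine (Finset.prod_eq_single j (fun i _ hij => ?_)
          (fun h => absurd (Finset.mem_univ j) h)).trans (by rw [Function.update_self])
      rw [Function.update_of_ne hij]
      exact measure_univ
    have hgm : ∀ j, Measurable ((S j).indicator (fun _ => (1 : ℝ))) := fun j =>
      measurable_const.indicator (hSmeas j)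
    have hInt : ∀ j, Integrable (fun x : Fin d → 𝒳 =>
        (S j).indicator (fun _ => (1 : ℝ)) (x j)) (Measure.pi μ) := by
      intro j
      have : Integrable ((S j).indicator (fun _ => (1 : ℝ))) ((Measure.pi μ).map (fun x => x j)) := by
        rw [hmap j]
        exact (integrable_const (1 : ℝ)).indicator (hSmeas j)
      exact (integrable_map_measure (hgm j).aestronglyMeasurable
        (measurable_pi_apply j).aemeasurable).mp this
    have hint : ∀ j, (∫ x : Fin d → 𝒳,
        (S j).indicator (fun _ => (1 : ℝ)) (x j) ∂(Measure.pi μ))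
        = (μ j (S j)).toReal := by
      intro j
      rw [← integral_map (measurable_pi_apply j).aemeasurable (hgm j).aestronglyMeasurable,
        hmap j, integral_indicator_const _ (hSmeas j), smul_eq_mul, mul_one]
      rfl
    have hval : ∀ j, (μ j (S j)).toReal = if η j then P1 else P0 := by
      intro j
      rw [hμ, hS]; dsimp only
      by_cases hj : η j <;> simp [hj, hP1, hP0def, hAc']
    calc (∫ x : Fin d → 𝒳,
        (∑ j, |(if t ≤ L (x j) then (1 : ℝ) else 0) - (if η j then (1 : ℝ) else 0)|)
        ∂(Measure.pi μ))
        = ∫ x : Fin d → 𝒳, (∑ j, (S j).indicator (fun _ => (1 : ℝ)) (x j)) ∂(Measure.pi μ) := by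
          exact integral_congr_ae (Filter.Eventually.of_forall hpt)
      _ = ∑ j, ∫ x : Fin d → 𝒳, (S j).indicator (fun _ => (1 : ℝ)) (x j) ∂(Measure.pi μ) :=
          integral_finset_sum _ fun j _ => hInt j
      _ = ∑ j, (if η j then P1 else P0) := by
          exact Finset.sum_congr rfl fun j _ => by rw [hint j, hval j]
      _ = (s : ℝ) * P1 + ((d - s : ℕ) : ℝ) * P0 := by
          rw [Finset.sum_ite, Finset.sum_const, Finset.sum_const]
          have h1 : (Finset.univ.filter fun j => η j = true).card = s := hη
          have h2 : (Finset.univ.filter fun j => ¬ (η j = true)).card = d - s := by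
            have := Finset.card_filter_add_card_filter_not
              (s := (Finset.univ : Finset (Fin d))) (p := fun j => η j = true)
            rw [Finset.card_univ, Fintype.card_fin] at this
            omega
          rw [show (Finset.univ.filter fun j => η j).card
              = (Finset.univ.filter fun j => η j = true).card from rfl]
          rw [h1]
          rw [show (Finset.univ.filter fun j => ¬ (η j)).card
              = (Finset.univ.filter fun j => ¬ (η j = true)).card from rfl]
          rw [h2, nsmul_eq_mul, nsmul_eq_mul]
  have hnonempty : Nonempty
      {η : Fin d → Bool // (Finset.univ.filter fun j => η j = true).card = s} := by
    refine ⟨⟨fun j => decide ((j : ℕ) < s), ?_⟩⟩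
    have h1 : (Finset.univ.filter fun j : Fin d => (decide ((j : ℕ) < s)) = true)
        = Finset.Iio (⟨s, hsd⟩ : Fin d) := by
      ext j
      simp [Fin.lt_def]
    rw [h1, Fin.card_Iio]
  rw [iSup_congr key, ciSup_const, hΨ]
  have hs0 : (s : ℝ) ≠ 0 := by positivity
  have hcast : ((d - s : ℕ) : ℝ) = (d : ℝ) - (s : ℝ) := by
    push_cast [Nat.cast_sub hsd.le]; ring
  rw [hcast]
  field_simp
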